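/- Let n ≥ 5, let 5 ≤ k ≤ n with k odd, set d = (k−1)/2, and let v : Z_k → Z_n be injective. Then every characteristic vector x of a multicut of the complete graph K_n satisfies the half-chorded odd cycle inequality Σ_{i ∈ Z_k} ( x_{v_i v_{i+d}} − x_{v_i v_{i+1}} ) ≤ k − 3. -/

import Mathlib

open Finset

open scoped Classical

variable {V : Type*}

/-- A decomposition of a graph `G`: a partition of the node set all of whose blocks
induce connected subgraphs. -/
def IsDecomposition (G : SimpleGraph V) (P : Set (Set V)) : Prop :=
  Setoid.IsPartition P ∧ ∀ U ∈ P, (G.induce U).Connected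

/-- Two nodes lie in a common block of `P`. -/
def SameBlock (P : Set (Set V)) (u v : V) : Prop :=
  ∃ U ∈ P, u ∈ U ∧ v ∈ U

/-- The edge `e` straddles two distinct blocks of `P`. -/
def Crosses (P : Set (Set V)) (e : Sym2 V) : Prop :=
  ∃ u v, e = s(u, v) ∧ ¬ SameBlock P u v

/-- The multicut of `G` induced by a decomposition `P`. -/
def inducedMulticut (G : SimpleGraph V) (P : Set (Set V)) : Set (Sym2 V) :=
  {e | e ∈ G.edgeSet ∧ Crosses P e}

/-- `M` is a multicut of `G`. -/
def IsMulticut (G : SimpleGraph V) (M : Set (Sym2 V)) : Prop :=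
  ∃ P, IsDecomposition G P ∧ M = inducedMulticut G P

/-- The characteristic vector (in the ambient space `Sym2 V → ℝ`, with coordinates
outside the edge set of `H` pinned to `0`) of the multicut of `H` induced by `P`. -/
noncomputable def multicutVec (H : SimpleGraph V) (P : Set (Set V)) : Sym2 V → ℝ :=
  fun e => if e ∈ H.edgeSet ∧ Crosses P e then 1 else 0

/-- Characteristic vectors of multicuts of `H` lifted from `G`. -/
def liftedVectors (G H : SimpleGraph V) : Set (Sym2 V → ℝ) :=
  {x | ∃ P, IsDecomposition G P ∧ x = multicutVec H P}

/-- The lifted multicut polytope with respect to `G` and `H`. -/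
def LMC (G H : SimpleGraph V) : Set (Sym2 V → ℝ) :=
  convexHull ℝ (liftedVectors G H)

/-- The inequality `f x ≤ b` is valid for `P` and its equality set has affine dimension
`|E ∪ F| - 1`, i.e. one less than the dimension of the corresponding lifted multicut
polytope for the augmented graph `H`. -/
def DefinesFacet (H : SimpleGraph V) (P : Set (Sym2 V → ℝ))
    (f : (Sym2 V → ℝ) → ℝ) (b : ℝ) : Prop :=
  (∀ x ∈ P, f x ≤ b) ∧
  Module.finrank ℝ (affineSpan ℝ {x | x ∈ P ∧ f x = b}).direction + 1 = Nat.card H.edgeSet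

open Fin.NatCast in
/-- validity of the half-chorded odd cycle inequality for the multicut
polytope of the complete graph `K_n`: for odd `5 ≤ k ≤ n`, `d = (k-1)/2` and an
injective `v : Z_k → Z_n` (nodes as `Fin n`, indices as `Fin k` with cyclic addition),
every characteristic vector `x` of a multicut of `K_n` satisfies
`∑_i (x_{v_i v_{i+d}} - x_{v_i v_{i+1}}) ≤ k - 3`. -/
theorem half_chorded_odd_cycle_inequality_valid
    (n k : ℕ) (hn : 5 ≤ n) (hk : 5 ≤ k) (hkn : k ≤ n) (hodd : Odd k)
    (v : Fin k → Fin n) (hv : Function.Injective v)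
    (x : Sym2 (Fin n) → ℝ)
    (hx : x ∈ liftedVectors (⊤ : SimpleGraph (Fin n)) ⊤) :
    ∑ i : Fin k,
        (x s(v i, v (i + ⟨(k - 1) / 2, by omega⟩)) - x s(v i, v (i + ⟨1, by omega⟩)))
      ≤ (k : ℝ) - 3 := by
  obtain ⟨P, ⟨hpart, -⟩, rfl⟩ := hx
  haveI : NeZero k := ⟨by omega⟩
  set d : ℕ := (k - 1) / 2 with hd
  have hk2 : k = 2 * d + 1 := by obtain ⟨m, hm⟩ := hodd; omega
  have hd2 : 2 ≤ d := by omega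
  have hdk : d < k := by omega
  have Brefl : ∀ a : Fin n, SameBlock P a a := by
    intro a
    obtain ⟨U, ⟨hU, haU⟩, -⟩ := hpart.2 a
    exact ⟨U, hU, haU, haU⟩
  have Bsymm : ∀ a b : Fin n, SameBlock P a b → SameBlock P b a := by
    rintro a b ⟨U, hU, h1, h2⟩; exact ⟨U, hU, h2, h1⟩
  have Btrans : ∀ a b c : Fin n, SameBlock P a b → SameBlock P b c → SameBlock P a c := by
    rintro a b c ⟨U, hU, haU, hbU⟩ ⟨W, hW, hbW, hcW⟩
    obtain ⟨V', hV'⟩ := hpart.2 b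
    have h1 := hV'.2 U ⟨hU, hbU⟩
    have h2 := hV'.2 W ⟨hW, hbW⟩
    exact ⟨U, hU, haU, (h1.trans h2.symm) ▸ hcW⟩
  set f : Fin k → Fin k → ℤ := fun a b => if SameBlock P (v a) (v b) then 0 else 1 with hf
  have hval : ∀ a b : Fin k, a ≠ b →
      multicutVec (⊤ : SimpleGraph (Fin n)) P s(v a, v b) = ((f a b : ℤ) : ℝ) := by
    intro a b hab
    have hvab : v a ≠ v b := fun h => hab (hv h)
    unfold multicutVec
    by_cases hB : SameBlock P (v a) (v b)
    · rw [if_neg, hf]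
      · simp [hB]
      rintro ⟨-, u', v', heq, hns⟩
      rw [Sym2.eq_iff] at heq
      rcases heq with ⟨h1, h2⟩ | ⟨h1, h2⟩
      · exact hns (h1 ▸ h2 ▸ hB)
      · exact hns (h1 ▸ h2 ▸ Bsymm _ _ hB)
    · rw [if_pos ⟨by simp [hvab], ⟨v a, v b, rfl, hB⟩⟩, hf]
      simp [hB]
  have hdF : (⟨(k - 1) / 2, by omega⟩ : Fin k) = (d : Fin k) := by
    apply Fin.ext
    simp [Fin.val_natCast, Nat.mod_eq_of_lt hdk, hd, Nat.mod_eq_of_lt (hd ▸ hdk : (k - 1) / 2 < k)]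
  have h1F : (⟨1, by omega⟩ : Fin k) = (1 : Fin k) := by
    apply Fin.ext
    simp [Fin.val_one, Nat.mod_eq_of_lt (by omega : 1 < k)]
  have hne : ∀ (i c : Fin k), c ≠ 0 → i ≠ i + c := by
    intro i c hc h
    exact hc (add_eq_left.mp h.symm)
  have hdF0 : (d : Fin k) ≠ 0 := by
    intro h
    have := congrArg Fin.val h
    simp [Fin.val_natCast, Nat.mod_eq_of_lt hdk] at this
    omega
  have h1F0 : (1 : Fin k) ≠ 0 := by
    intro h
    have := congrArg Fin.val h
    simp [Fin.val_one, Nat.mod_eq_of_lt (by omega : 1 < k)] at this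
  -- chain lemma
  have chain : ∀ (i : Fin k) (m : ℕ), m ≤ d →
      (∀ ℓ < m, SameBlock P (v (i + (ℓ : Fin k))) (v (i + (ℓ : Fin k) + 1))) →
      SameBlock P (v i) (v (i + (m : Fin k))) := by
    intro i m
    induction m with
    | zero => intro _ _; simpa using Brefl (v i)
    | succ m ih =>
      intro hm h
      have h1 := ih (by omega) (fun ℓ hℓ => h ℓ (by omega))
      have h2 := h m (by omega)
      have hcast : i + ((m + 1 : ℕ) : Fin k) = i + (m : Fin k) + 1 := by
        push_cast
        simp only [Nat.cast_succ, add_assoc]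
      rw [hcast]
      exact Btrans _ _ _ h1 h2
  -- nonnegativity of f
  have hnn : ∀ a b : Fin k, (0 : ℤ) ≤ f a b := by
    intro a b
    by_cases h : SameBlock P (v a) (v b) <;> simp [hf, h]
  -- per-index inequality
  have heach : ∀ i : Fin k,
      (d : ℤ) * f i (i + (d : Fin k)) ≤
        (∑ ℓ ∈ Finset.range d, f (i + (ℓ : Fin k)) (i + (ℓ : Fin k) + 1)) + ((d : ℤ) - 1) := by
    intro i
    by_cases hB : SameBlock P (v i) (v (i + (d : Fin k)))
    · have hz : f i (i + (d : Fin k)) = 0 := by rw [hf]; simp [hB]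
      rw [hz]
      have := Finset.sum_nonneg (fun ℓ (_ : ℓ ∈ Finset.range d) =>
        hnn (i + (ℓ : Fin k)) (i + (ℓ : Fin k) + 1))
      have : (1 : ℤ) ≤ d := by exact_mod_cast Nat.one_le_of_lt hd2
      linarith [Finset.sum_nonneg (fun ℓ (_ : ℓ ∈ Finset.range d) =>
        hnn (i + (ℓ : Fin k)) (i + (ℓ : Fin k) + 1))]
    · have hz : f i (i + (d : Fin k)) = 1 := by rw [hf]; simp [hB]
      rw [hz, mul_one]
      have hex : ∃ ℓ, ℓ < d ∧ ¬ SameBlock P (v (i + (ℓ : Fin k))) (v (i + (ℓ : Fin k) + 1)) := by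
        by_contra hcon
        push_neg at hcon
        exact hB (chain i d le_rfl hcon)
      obtain ⟨ℓ, hℓ, hns⟩ := hex
      have hone : f (i + (ℓ : Fin k)) (i + (ℓ : Fin k) + 1) = 1 := by rw [hf]; simp [hns]
      have h1 : (1 : ℤ) ≤ ∑ ℓ ∈ Finset.range d, f (i + (ℓ : Fin k)) (i + (ℓ : Fin k) + 1) := by
        calc (1 : ℤ) = f (i + (ℓ : Fin k)) (i + (ℓ : Fin k) + 1) := hone.symm
        _ ≤ _ := Finset.single_le_sum
            (fun j (_ : j ∈ Finset.range d) => hnn (i + (j : Fin k)) (i + (j : Fin k) + 1))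
            (Finset.mem_range.mpr hℓ)
      linarith
  -- reindexing
  have hshift : ∀ c : Fin k,
      (∑ i : Fin k, f (i + c) (i + c + 1)) = ∑ j : Fin k, f j (j + 1) :=
    fun c => Fintype.sum_equiv (Equiv.addRight c) _ _ (fun i => rfl)
  set Z : ℤ := ∑ i : Fin k, f i (i + (d : Fin k)) with hZ
  set Y : ℤ := ∑ j : Fin k, f j (j + 1) with hY
  have hmain : (d : ℤ) * Z ≤ (d : ℤ) * Y + (k : ℤ) * ((d : ℤ) - 1) := by
    have hsumle := Finset.sum_le_sum (fun i (_ : i ∈ Finset.univ) => heach i)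
    rw [← Finset.mul_sum] at hsumle
    have hrw : ∑ i : Fin k, ((∑ ℓ ∈ Finset.range d, f (i + (ℓ : Fin k)) (i + (ℓ : Fin k) + 1))
        + ((d : ℤ) - 1)) = (d : ℤ) * Y + (k : ℤ) * ((d : ℤ) - 1) := by
      rw [Finset.sum_add_distrib, Finset.sum_const, Finset.card_univ, Fintype.card_fin,
        Finset.sum_comm]
      have hcg : ∀ ℓ ∈ Finset.range d,
          (∑ i : Fin k, f (i + (ℓ : Fin k)) (i + (ℓ : Fin k) + 1)) = Y :=
        fun ℓ _ => hshift (ℓ : Fin k)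
      rw [Finset.sum_congr rfl hcg, Finset.sum_const, Finset.card_range]
      simp [nsmul_eq_mul]
    rw [hrw] at hsumle
    exact hsumle
  have hfinal : Z - Y ≤ (k : ℤ) - 3 := by
    by_contra hcon
    push_neg at hcon
    have h1 : (2 * (d : ℤ) - 1) ≤ Z - Y := by
      have : (k : ℤ) = 2 * d + 1 := by exact_mod_cast hk2
      omega
    have h2 : (d : ℤ) * (2 * (d : ℤ) - 1) ≤ (d : ℤ) * (Z - Y) :=
      mul_le_mul_of_nonneg_left h1 (by positivity)
    have hkz : (k : ℤ) = 2 * d + 1 := by exact_mod_cast hk2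
    nlinarith
  -- now convert the real goal
  have hterm : ∀ i : Fin k,
      multicutVec (⊤ : SimpleGraph (Fin n)) P s(v i, v (i + ⟨(k - 1) / 2, by omega⟩))
        - multicutVec (⊤ : SimpleGraph (Fin n)) P s(v i, v (i + ⟨1, by omega⟩))
      = (((f i (i + (d : Fin k)) - f i (i + 1)) : ℤ) : ℝ) := by
    intro i
    rw [hdF, h1F, hval i (i + (d : Fin k)) (hne i _ hdF0),
      hval i (i + 1) (hne i _ h1F0)]
    push_cast
    ring
  calc ∑ i : Fin k,
        (multicutVec (⊤ : SimpleGraph (Fin n)) P s(v i, v (i + ⟨(k - 1) / 2, by omega⟩))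
          - multicutVec (⊤ : SimpleGraph (Fin n)) P s(v i, v (i + ⟨1, by omega⟩)))
      = ∑ i : Fin k, (((f i (i + (d : Fin k)) - f i (i + 1)) : ℤ) : ℝ) := by
        exact Finset.sum_congr rfl (fun i _ => hterm i)
    _ = ((Z - Y : ℤ) : ℝ) := by
        rw [hZ, hY, ← Finset.sum_sub_distrib]
        push_cast
        ring
    _ ≤ (((k : ℤ) - 3 : ℤ) : ℝ) := by exact_mod_cast hfinal
    _ = (k : ℝ) - 3 := by push_cast; ring
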